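/- arXiv:1905.11482 — 6 statements merged into one kernel-verified Lean document; each statement's English description precedes it below -/
import Mathlib

section
/- Let d ≥ 2, let g be a symmetric real d×d array of coupling constants with zero diagonal, let H₀ := Σ_{n>m} g_{n,m} B_{n,m}, and suppose the associated graph G₀ is connected. Then the real Lie subalgebra of the d×d complex matrices (viewed as a Lie algebra over ℝ with the commutator bracket) generated by the set {iH₀} ∪ {iP_n : n ∈ Fin d} contains every skew-Hermitian d×d matrix; that is, the system is fully controllable: the generated Lie algebra equals u(d), the Lie algebra of all matrices A with Aᴴ = −A. -/
open Matrix Complex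

attribute [local instance 100] LieRing.ofAssociativeRing

noncomputable section

/-- The diagonal rank-one projection `|n⟩⟨n|`. -/
def pMat (d : ℕ) (n : Fin d) : Matrix (Fin d) (Fin d) ℂ := Matrix.single n n 1

/-- The coupling operator `B_{n,m} = |n⟩⟨m| + |m⟩⟨n|`. -/
def bMat (d : ℕ) (n m : Fin d) : Matrix (Fin d) (Fin d) ℂ :=
  Matrix.single n m 1 + Matrix.single m n 1

/-- The drift Hamiltonian `H₀ = ∑_{n>m} g_{n,m} B_{n,m}`. -/
def drift (d : ℕ) (g : Fin d → Fin d → ℝ) : Matrix (Fin d) (Fin d) ℂ :=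
  ∑ n : Fin d, ∑ m : Fin d, if m < n then (g n m : ℂ) • bMat d n m else 0

/-- The graph `G₀` associated to the coupling constants. -/
def couplingGraph (d : ℕ) (g : Fin d → Fin d → ℝ) : SimpleGraph (Fin d) where
  Adj n m := n ≠ m ∧ g n m ≠ 0 ∧ g m n ≠ 0
  symm := ⟨fun n m h => ⟨h.1.symm, h.2.2, h.2.1⟩⟩
  loopless := ⟨fun n h => h.1 rfl⟩

/-! ### Auxiliary definitions and lemmas -/

/-- The skew operator `C_{n,m} = |n⟩⟨m| - |m⟩⟨n|`. -/
def cMat (d : ℕ) (n m : Fin d) : Matrix (Fin d) (Fin d) ℂ :=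
  Matrix.single n m 1 - Matrix.single m n 1

lemma sum_split {d : ℕ} {M : Type*} [AddCommMonoid M] (f : Fin d → Fin d → M) :
    ∑ i : Fin d, ∑ j : Fin d, f i j =
      ∑ i : Fin d, ∑ j : Fin d,
        (if j < i then f i j + f j i else if i = j then f i j else 0) := by
  have h1 : ∀ i j : Fin d,
      (if j < i then f i j + f j i else if i = j then f i j else 0)
        = (if j < i then f i j else 0) + ((if i = j then f i j else 0)
            + (if j < i then f j i else 0)) := by
    intro i j
    rcases lt_trichotomy i j with h | h | h
    · simp [h.not_gt, h.ne, h]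
    · simp [h, lt_irrefl]
    · simp [h, h.ne', (h.ne').symm]
  have h2 : ∀ i j : Fin d,
      f i j = (if j < i then f i j else 0) + ((if i = j then f i j else 0)
        + (if i < j then f i j else 0)) := by
    intro i j
    rcases lt_trichotomy i j with h | h | h
    · simp [h, h.not_gt, h.ne]
    · simp [h, lt_irrefl]
    · simp [h, h.not_gt, h.ne']
  calc ∑ i : Fin d, ∑ j : Fin d, f i j
      = ∑ i : Fin d, ∑ j : Fin d, ((if j < i then f i j else 0)
          + ((if i = j then f i j else 0) + (if i < j then f i j else 0))) := by
        simp_rw [← h2]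
    _ = (∑ i : Fin d, ∑ j : Fin d, (if j < i then f i j else 0))
        + ((∑ i : Fin d, ∑ j : Fin d, (if i = j then f i j else 0))
          + (∑ i : Fin d, ∑ j : Fin d, (if i < j then f i j else 0))) := by
        simp [Finset.sum_add_distrib]
    _ = (∑ i : Fin d, ∑ j : Fin d, (if j < i then f i j else 0))
        + ((∑ i : Fin d, ∑ j : Fin d, (if i = j then f i j else 0))
          + (∑ i : Fin d, ∑ j : Fin d, (if j < i then f j i else 0))) := by
        rw [Finset.sum_comm (f := fun i j => if i < j then f i j else 0)]
    _ = _ := by simp_rw [h1, Finset.sum_add_distrib]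

lemma drift_eq {d : ℕ} (g : Fin d → Fin d → ℝ)
    (hsymm : ∀ n m, g n m = g m n) (hdiag : ∀ n, g n n = 0) :
    drift d g = ∑ n : Fin d, ∑ m : Fin d, (g n m : ℂ) • Matrix.single n m 1 := by
  rw [drift, sum_split (fun n m => (g n m : ℂ) • Matrix.single n m 1)]
  apply Finset.sum_congr rfl; intro n _
  apply Finset.sum_congr rfl; intro m _
  split_ifs with h1 h2
  · rw [bMat, smul_add, hsymm n m]
  · subst h2; simp [hdiag n]
  · rfl

lemma lie_sum' {d : ℕ} {ι : Type*} (s : Finset ι) (x : Matrix (Fin d) (Fin d) ℂ)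
    (f : ι → Matrix (Fin d) (Fin d) ℂ) :
    ⁅x, ∑ i ∈ s, f i⁆ = ∑ i ∈ s, ⁅x, f i⁆ := by
  simp [Ring.lie_def, Finset.mul_sum, Finset.sum_mul, Finset.sum_sub_distrib]

lemma lie_pMat_bMat {d : ℕ} {n m : Fin d} (h : n ≠ m) :
    ⁅pMat d n, bMat d n m⁆ = cMat d n m := by
  simp only [Ring.lie_def, pMat, bMat, cMat, mul_add, add_mul,
    Matrix.single_mul_single_same, mul_one,
    Matrix.single_mul_single_of_ne _ _ _ _ h,
    Matrix.single_mul_single_of_ne _ _ _ _ h.symm]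
  abel

lemma lie_pMat_cMat {d : ℕ} {n m : Fin d} (h : n ≠ m) :
    ⁅pMat d n, cMat d n m⁆ = bMat d n m := by
  simp only [Ring.lie_def, pMat, cMat, bMat, mul_sub, sub_mul,
    Matrix.single_mul_single_same, mul_one,
    Matrix.single_mul_single_of_ne _ _ _ _ h,
    Matrix.single_mul_single_of_ne _ _ _ _ h.symm]
  abel

lemma lie_cMat_cMat {d : ℕ} {a b c : Fin d} (hab : a ≠ b) (hbc : b ≠ c) (hac : a ≠ c) :
    ⁅cMat d a b, cMat d b c⁆ = cMat d a c := by
  simp only [Ring.lie_def, cMat, mul_sub, sub_mul,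
    Matrix.single_mul_single_same, mul_one,
    Matrix.single_mul_single_of_ne _ _ _ _ hab,
    Matrix.single_mul_single_of_ne _ _ _ _ hab.symm,
    Matrix.single_mul_single_of_ne _ _ _ _ hbc,
    Matrix.single_mul_single_of_ne _ _ _ _ hbc.symm,
    Matrix.single_mul_single_of_ne _ _ _ _ hac,
    Matrix.single_mul_single_of_ne _ _ _ _ hac.symm]
  abel

lemma lie_pMat_std {d : ℕ} (n a b : Fin d) :
    ⁅pMat d n, Matrix.single a b (1 : ℂ)⁆ =
      (if a = n then Matrix.single n b 1 else 0)
        - (if b = n then Matrix.single a n 1 else 0) := by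
  rcases eq_or_ne a n with rfl | ha
  · rcases eq_or_ne b a with rfl | hb
    · simp [Ring.lie_def, pMat]
    · simp [Ring.lie_def, pMat, Matrix.single_mul_single_same,
        Matrix.single_mul_single_of_ne _ _ _ _ hb, Matrix.single_mul_single_of_ne _ _ _ _ hb.symm,
        hb]
  · rcases eq_or_ne b n with rfl | hb
    · simp [Ring.lie_def, pMat, Matrix.single_mul_single_same,
        Matrix.single_mul_single_of_ne _ _ _ _ ha, Matrix.single_mul_single_of_ne _ _ _ _ ha.symm,
        ha]
    · simp [Ring.lie_def, pMat, Matrix.single_mul_single_of_ne _ _ _ _ ha,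
        Matrix.single_mul_single_of_ne _ _ _ _ ha.symm,
        Matrix.single_mul_single_of_ne _ _ _ _ hb,
        Matrix.single_mul_single_of_ne _ _ _ _ hb.symm, ha, hb]

lemma lie_pp_std {d : ℕ} {n m : Fin d} (h : n ≠ m) (a b : Fin d) :
    ⁅pMat d m, ⁅pMat d n, Matrix.single a b (1 : ℂ)⁆⁆ =
      -((if b = m ∧ a = n then Matrix.single n m 1 else 0)
        + (if b = n ∧ a = m then Matrix.single m n 1 else 0)) := by
  rw [lie_pMat_std, lie_sub]
  rw [show ⁅pMat d m, if a = n then Matrix.single n b (1:ℂ) else 0⁆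
      = if a = n then ⁅pMat d m, Matrix.single n b (1:ℂ)⁆ else 0 by split <;> simp]
  rw [show ⁅pMat d m, if b = n then Matrix.single a n (1:ℂ) else 0⁆
      = if b = n then ⁅pMat d m, Matrix.single a n (1:ℂ)⁆ else 0 by split <;> simp]
  rw [lie_pMat_std, lie_pMat_std]
  split_ifs <;> simp_all

lemma lie_pp_drift {d : ℕ} (g : Fin d → Fin d → ℝ)
    (hsymm : ∀ n m, g n m = g m n) (hdiag : ∀ n, g n n = 0)
    {n m : Fin d} (h : n ≠ m) :
    ⁅pMat d m, ⁅pMat d n, drift d g⁆⁆ = (-(g n m : ℂ)) • bMat d n m := by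
  rw [drift_eq g hsymm hdiag]
  have key : ⁅pMat d m, ⁅pMat d n, ∑ a : Fin d, ∑ b : Fin d,
      (g a b : ℂ) • Matrix.single a b 1⁆⁆
      = ∑ a : Fin d, ∑ b : Fin d,
        (g a b : ℂ) • ⁅pMat d m, ⁅pMat d n, Matrix.single a b (1:ℂ)⁆⁆ := by
    simp only [lie_sum', lie_smul]
  rw [key]
  simp only [lie_pp_std h, smul_neg, smul_add, smul_ite, smul_zero, ite_and]
  simp only [Finset.sum_neg_distrib, Finset.sum_add_distrib, Finset.sum_ite_eq',
    Finset.mem_univ, if_true]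
  rw [hsymm m n]
  simp [bMat, smul_add, neg_add, smul_single]
  abel

lemma stdBasisMatrix_conjT {d : ℕ} (i j : Fin d) (c : ℂ) :
    (Matrix.single i j c)ᴴ = Matrix.single j i (star c) := by
  ext p q
  simp only [Matrix.conjTranspose_apply, Matrix.single, Matrix.of_apply,
    apply_ite (star : ℂ → ℂ), star_zero, and_comm]

lemma pMat_herm {d : ℕ} (n : Fin d) : (pMat d n)ᴴ = pMat d n := by
  simp [pMat, stdBasisMatrix_conjT]

lemma bMat_herm {d : ℕ} (n m : Fin d) : (bMat d n m)ᴴ = bMat d n m := by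
  simp [bMat, stdBasisMatrix_conjT, add_comm]

lemma drift_herm {d : ℕ} (g : Fin d → Fin d → ℝ)
    (hsymm : ∀ n m, g n m = g m n) (hdiag : ∀ n, g n n = 0) :
    (drift d g)ᴴ = drift d g := by
  rw [drift_eq g hsymm hdiag]
  rw [show (∑ n : Fin d, ∑ m : Fin d, (g n m : ℂ) • Matrix.single n m (1:ℂ))ᴴ
      = ∑ n : Fin d, ∑ m : Fin d, (g n m : ℂ) • Matrix.single m n (1:ℂ) by
    simp [Matrix.conjTranspose_sum, Matrix.conjTranspose_smul, stdBasisMatrix_conjT]]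
  rw [Finset.sum_comm]
  apply Finset.sum_congr rfl; intro n _
  apply Finset.sum_congr rfl; intro m _
  rw [hsymm m n]

lemma rsmul_eq {d : ℕ} (r : ℝ) (M : Matrix (Fin d) (Fin d) ℂ) :
    r • M = (r : ℂ) • M := by
  ext i j
  simp [Matrix.smul_apply, Complex.real_smul]

/-- u(d), the skew-Hermitian matrices, as a real Lie subalgebra. -/
def skewLie (d : ℕ) : LieSubalgebra ℝ (Matrix (Fin d) (Fin d) ℂ) where
  carrier := {A | Aᴴ = -A}
  add_mem' := by
    intro a b ha hb
    simp only [Set.mem_setOf_eq] at *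
    rw [Matrix.conjTranspose_add, ha, hb, neg_add]
  zero_mem' := by simp
  smul_mem' := by
    intro c x hx
    simp only [Set.mem_setOf_eq] at *
    rw [Matrix.conjTranspose_smul, hx, star_trivial, smul_neg]
  lie_mem' := by
    intro x y hx hy
    simp only [Set.mem_setOf_eq] at *
    rw [Ring.lie_def, Matrix.conjTranspose_sub, Matrix.conjTranspose_mul,
      Matrix.conjTranspose_mul, hx, hy, neg_mul_neg, neg_mul_neg, neg_sub]

lemma pair_eq {d : ℕ} {i j : Fin d} (hij : i ≠ j) (z : ℂ) :
    Matrix.single i j z + Matrix.single j i (-(star z)) =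
      z.re • cMat d i j + z.im • (Complex.I • bMat d i j) := by
  ext p q
  simp only [cMat, bMat, Matrix.add_apply, Matrix.sub_apply, Matrix.smul_apply,
    Matrix.single, Matrix.of_apply, smul_ite, smul_zero, smul_sub, smul_add,
    smul_eq_mul, mul_one]
  split_ifs with h1 h2 <;>
    first
      | (exact absurd (h1.1.symm.trans h2.2) hij)
      | (simp_all [Complex.ext_iff, Complex.real_smul] <;> ring_nf <;> simp_all)

lemma diag_eq {d : ℕ} (i : Fin d) (z : ℂ) (hz : star z = -z) :
    Matrix.single i i z = z.im • (Complex.I • pMat d i) := by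
  have hre : z.re = 0 := by
    have := congrArg Complex.re hz
    simp at this
    linarith
  have hz2 : z = (z.im : ℂ) * Complex.I := by
    apply Complex.ext <;> simp [hre]
  calc Matrix.single i i z
      = Matrix.single i i ((z.im : ℝ) • (Complex.I • (1:ℂ))) := by
        congr 1
        simp only [Complex.real_smul, smul_eq_mul, mul_one]
        rw [← hz2]
    _ = z.im • (Complex.I • pMat d i) := by
        rw [pMat, smul_single, smul_single]

/-- **Full controllability.** If the graph associated to the drift Hamiltonian is
connected, then the real Lie algebra generated by `iH₀` together with the diagonal
controls `iP_n` is exactly `u(d)`, the Lie algebra of skew-Hermitian matrices. -/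
theorem controllability (d : ℕ) (hd : 2 ≤ d)
    (g : Fin d → Fin d → ℝ)
    (hsymm : ∀ n m, g n m = g m n) (hdiag : ∀ n, g n n = 0)
    (hconn : (couplingGraph d g).Connected) :
    (LieSubalgebra.lieSpan ℝ (Matrix (Fin d) (Fin d) ℂ)
        ({Complex.I • drift d g} ∪ Set.range (fun n : Fin d => Complex.I • pMat d n)) :
      Set (Matrix (Fin d) (Fin d) ℂ)) =
    {A : Matrix (Fin d) (Fin d) ℂ | Aᴴ = -A} := by
  set L := LieSubalgebra.lieSpan ℝ (Matrix (Fin d) (Fin d) ℂ)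
      ({Complex.I • drift d g} ∪ Set.range (fun n : Fin d => Complex.I • pMat d n)) with hL
  apply Set.Subset.antisymm
  · -- lieSpan ⊆ skew-Hermitian
    have hle : L ≤ skewLie d := by
      rw [hL, LieSubalgebra.lieSpan_le]
      rintro x (rfl | ⟨n, rfl⟩)
      · show ((Complex.I • drift d g)ᴴ = -(Complex.I • drift d g))
        rw [Matrix.conjTranspose_smul, drift_herm g hsymm hdiag, Complex.star_def,
          Complex.conj_I, neg_smul]
      · show ((Complex.I • pMat d n)ᴴ = -(Complex.I • pMat d n))
        rw [Matrix.conjTranspose_smul, pMat_herm, Complex.star_def, Complex.conj_I, neg_smul]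
    intro x hx
    exact hle hx
  · -- skew-Hermitian ⊆ lieSpan
    intro A hA
    have hstar : ∀ i j, star (A i j) = -(A j i) := by
      intro i j
      simpa [Matrix.conjTranspose_apply, Matrix.neg_apply] using congrFun (congrFun hA j) i
    have hA' : ∀ i j, A j i = -star (A i j) := by
      intro i j
      rw [hstar, neg_neg]
    have hp : ∀ n, Complex.I • pMat d n ∈ L :=
      fun n => LieSubalgebra.subset_lieSpan (Or.inr ⟨n, rfl⟩)
    have hd0 : Complex.I • drift d g ∈ L := LieSubalgebra.subset_lieSpan (Or.inl rfl)
    -- i B_{n,m} ∈ L for edges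
    have hBe : ∀ n m : Fin d, n ≠ m → g n m ≠ 0 → Complex.I • bMat d n m ∈ L := by
      intro n m hnm hg
      have h1 : ⁅Complex.I • pMat d m, ⁅Complex.I • pMat d n, Complex.I • drift d g⁆⁆ ∈ L :=
        L.lie_mem (hp m) (L.lie_mem (hp n) hd0)
      have h2 : ⁅Complex.I • pMat d m, ⁅Complex.I • pMat d n, Complex.I • drift d g⁆⁆
          = (g n m : ℝ) • (Complex.I • bMat d n m) := by
        rw [smul_lie, lie_smul, smul_lie, lie_smul, lie_smul, lie_pp_drift g hsymm hdiag hnm,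
          rsmul_eq]
        rw [smul_smul, smul_smul, smul_smul, smul_smul]
        congr 1
        simp [Complex.I_mul_I]
        ring
      rw [h2] at h1
      have h3 := L.smul_mem (g n m)⁻¹ h1
      rwa [smul_smul, inv_mul_cancel₀ hg, one_smul] at h3
    -- C_{n,m} ∈ L for edges
    have hCe : ∀ n m : Fin d, n ≠ m → g n m ≠ 0 → cMat d n m ∈ L := by
      intro n m hnm hg
      have h1 : ⁅Complex.I • pMat d n, Complex.I • bMat d n m⁆ ∈ L :=
        L.lie_mem (hp n) (hBe n m hnm hg)
      have h2 : ⁅Complex.I • pMat d n, Complex.I • bMat d n m⁆ = -cMat d n m := by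
        rw [smul_lie, lie_smul, lie_pMat_bMat hnm, smul_smul, Complex.I_mul_I, neg_smul, one_smul]
      rw [h2] at h1
      have := neg_mem h1
      rwa [neg_neg] at this
    -- C_{n,m} ∈ L for all pairs, by connectivity
    have hCall : ∀ n m : Fin d, n ≠ m → cMat d n m ∈ L := by
      have key : ∀ (n m : Fin d), (couplingGraph d g).Walk n m → n ≠ m → cMat d n m ∈ L := by
        intro n m w
        induction w with
        | nil => intro hne; exact absurd rfl hne
        | @cons u v x hadj p ih =>
          intro hne
          have hedge : cMat d u v ∈ L := hCe u v hadj.1 hadj.2.1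
          rcases eq_or_ne v x with rfl | hvx
          · exact hedge
          · have := L.lie_mem hedge (ih hvx)
            rwa [lie_cMat_cMat hadj.1 hvx hne] at this
      intro n m hne
      exact (hconn.preconnected n m).elim (fun w => key n m w hne)
    -- i B_{n,m} ∈ L for all pairs
    have hBall : ∀ n m : Fin d, n ≠ m → Complex.I • bMat d n m ∈ L := by
      intro n m hne
      have h1 := L.lie_mem (hp n) (hCall n m hne)
      rwa [smul_lie, lie_pMat_cMat hne] at h1
    -- decompose A
    have hdecomp : A = ∑ i : Fin d, ∑ j : Fin d,
        (if j < i then (A i j).re • cMat d i j + (A i j).im • (Complex.I • bMat d i j)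
          else if i = j then (A i i).im • (Complex.I • pMat d i) else 0) := by
      conv_lhs => rw [Matrix.matrix_eq_sum_single A]
      rw [sum_split (fun i j => Matrix.single i j (A i j))]
      refine Finset.sum_congr rfl fun i _ => Finset.sum_congr rfl fun j _ => ?_
      split_ifs with h1 h2
      · rw [hA' i j]
        exact pair_eq (ne_of_gt h1) (A i j)
      · subst h2
        exact diag_eq i (A i i) (hstar i i)
      · rfl
    rw [hdecomp]
    refine sum_mem fun i _ => sum_mem fun j _ => ?_
    split_ifs with h1 h2
    · exact L.add_mem (L.smul_mem _ (hCall i j (ne_of_gt h1)))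
        (L.smul_mem _ (hBall i j (ne_of_gt h1)))
    · exact L.smul_mem _ (hp i)
    · exact L.zero_mem

end
end

section
/- Let H be a d×d complex matrix and A ⊆ Fin d a subset. For S ⊆ A let D_S be the diagonal ±1 matrix with entry −1 at positions in S and +1 elsewhere. Then 2^{−|A|} Σ_{S ⊆ A} D_S H D_S = H', where H' is the matrix with entries H'_{n,m} = H_{n,m} if n = m or (n ∉ A and m ∉ A), and H'_{n,m} = 0 otherwise. In particular, if H has zero diagonal and A = Fin d \ {n, m} for distinct n, m, the average equals H_{n,m}|n⟩⟨m| + H_{m,n}|m⟩⟨n|, i.e., the decoupling sequence reduces the graph of H to the single edge (n,m). -/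
open Matrix Complex

noncomputable section

/-- The diagonal `±1` sign matrix attached to a subset `S`: entry `−1` at positions in
`S` and `+1` elsewhere. -/
def signMat (d : ℕ) (S : Finset (Fin d)) : Matrix (Fin d) (Fin d) ℂ :=
  Matrix.diagonal fun n => if n ∈ S then (-1 : ℂ) else 1

def sgn {d : ℕ} (S : Finset (Fin d)) (x : Fin d) : ℂ := if x ∈ S then -1 else 1

lemma sum_sgn_zero {d : ℕ} (A : Finset (Fin d)) (n m : Fin d) (hn : n ∈ A) (hnm : n ≠ m) :
    ∑ S ∈ A.powerset, sgn S n * sgn S m = 0 := by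
  rw [← Finset.insert_erase hn,
    Finset.sum_powerset_insert (Finset.notMem_erase n A)]
  have h1 : ∀ S ∈ (A.erase n).powerset, sgn S n * sgn S m = sgn S m := by
    intro S hS
    have : n ∉ S := fun h => Finset.notMem_erase n A (Finset.mem_powerset.1 hS h)
    simp [sgn, this]
  have h2 : ∀ S ∈ (A.erase n).powerset, sgn (insert n S) n * sgn (insert n S) m
      = -sgn S m := by
    intro S hS
    have hm : m ∈ insert n S ↔ m ∈ S := by
      simp [Finset.mem_insert, hnm.symm]
    by_cases h : m ∈ S <;> simp [sgn, hm, h]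
  rw [Finset.sum_congr rfl h1, Finset.sum_congr rfl h2]
  simp

lemma sum_sgn {d : ℕ} (A : Finset (Fin d)) (n m : Fin d) :
    ∑ S ∈ A.powerset, sgn S n * sgn S m =
      if n = m ∨ (n ∉ A ∧ m ∉ A) then (2 : ℂ) ^ A.card else 0 := by
  by_cases hnm : n = m
  · subst hnm
    have : ∀ S ∈ A.powerset, sgn S n * sgn S n = 1 := by
      intro S _; by_cases h : n ∈ S <;> simp [sgn, h]
    rw [Finset.sum_congr rfl this]
    simp [Finset.card_powerset]
  · by_cases hn : n ∈ A
    · rw [sum_sgn_zero A n m hn hnm]; simp [hnm, hn]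
    · by_cases hm : m ∈ A
      · have := sum_sgn_zero A m n hm (Ne.symm hnm)
        rw [show (∑ S ∈ A.powerset, sgn S n * sgn S m)
            = ∑ S ∈ A.powerset, sgn S m * sgn S n from
          Finset.sum_congr rfl fun S _ => mul_comm _ _, this]
        simp [hnm, hm]
      · have : ∀ S ∈ A.powerset, sgn S n * sgn S m = 1 := by
          intro S hS
          have h1 : n ∉ S := fun h => hn (Finset.mem_powerset.1 hS h)
          have h2 : m ∉ S := fun h => hm (Finset.mem_powerset.1 hS h)
          simp [sgn, h1, h2]
        rw [Finset.sum_congr rfl this]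
        simp [hnm, hn, hm, Finset.card_powerset]

/-- **Dynamical decoupling of a set of vertices.** Averaging the conjugations of `H` by
all sign matrices `D_S`, `S ⊆ A`, kills exactly the entries `(n,m)` with `n ≠ m` meeting
`A`. In particular, if `H` has zero diagonal and `A = univ \ {n, m}`, the average equals
`H_{n,m}|n⟩⟨m| + H_{m,n}|m⟩⟨n|`, i.e. the graph of `H` is reduced to the single edge
`(n,m)`. -/
theorem decoupling_average (d : ℕ) (H : Matrix (Fin d) (Fin d) ℂ) (A : Finset (Fin d)) :
    ((1 / 2 ^ A.card : ℂ) • ∑ S ∈ A.powerset, signMat d S * H * signMat d S =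
      Matrix.of fun n m => if n = m ∨ (n ∉ A ∧ m ∉ A) then H n m else 0) ∧
    (∀ n m : Fin d, n ≠ m → (∀ a, H a a = 0) → A = Finset.univ \ {n, m} →
      (1 / 2 ^ A.card : ℂ) • ∑ S ∈ A.powerset, signMat d S * H * signMat d S =
        H n m • Matrix.single n m 1 + H m n • Matrix.single m n 1) := by
  have key : (1 / 2 ^ A.card : ℂ) • ∑ S ∈ A.powerset, signMat d S * H * signMat d S =
      Matrix.of fun n m => if n = m ∨ (n ∉ A ∧ m ∉ A) then H n m else 0 := by
    ext n m
    have hentry : ∀ S : Finset (Fin d),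
        (signMat d S * H * signMat d S) n m = sgn S n * sgn S m * H n m := by
      intro S
      simp only [signMat, Matrix.mul_diagonal, Matrix.diagonal_mul, sgn]
      ring
    rw [Matrix.smul_apply, Matrix.sum_apply, Finset.sum_congr rfl fun S _ => hentry S,
      ← Finset.sum_mul, sum_sgn]
    have h2 : (2 : ℂ) ^ A.card ≠ 0 := pow_ne_zero _ two_ne_zero
    by_cases h : n = m ∨ (n ∉ A ∧ m ∉ A) <;> simp [h, smul_eq_mul]
  refine ⟨key, fun n m hnm hdiag hA => ?_⟩
  rw [key]
  subst hA
  ext a b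
  have hmem : ∀ x : Fin d, (x ∉ Finset.univ \ ({n, m} : Finset (Fin d))) ↔ (x = n ∨ x = m) := by
    intro x; simp; tauto
  by_cases han : a = n <;> by_cases ham : a = m <;> by_cases hbn : b = n <;>
    by_cases hbm : b = m <;>
    simp_all [Matrix.single, hmem, hnm, Ne.symm hnm, hdiag, eq_comm]
end
end

section
/- Let d ≥ 3 and let n, m, k ∈ Fin d be pairwise distinct. Then conjugating the coupling B_{m,k} by the SWAP gate on (n,m) propagates the edge, up to a diagonal phase: exp(i(π/2) B_{n,m}) · B_{m,k} · exp(−i(π/2) B_{n,m}) = exp(i(π/2) P_n) · B_{n,k} · exp(−i(π/2) P_n). -/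
open Matrix Complex Real

noncomputable section

namespace SwapAux

open NormedSpace

variable {d : ℕ}

attribute [local instance] Matrix.linftyOpSemiNormedRing Matrix.linftyOpNormedRing
  Matrix.linftyOpNormedAlgebra

/-- Algebra hom sending `(a,b)` to `a•Q + b•(1-Q)` for an idempotent `Q`. -/
def idemHom (Q : Matrix (Fin d) (Fin d) ℂ) (hQ : Q * Q = Q) :
    (ℂ × ℂ) →ₐ[ℂ] Matrix (Fin d) (Fin d) ℂ where
  toFun p := p.1 • Q + p.2 • (1 - Q)
  map_one' := by simp
  map_mul' p q := by
    have hR : (1 - Q) * (1 - Q) = 1 - Q := by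
      rw [mul_sub, sub_mul, sub_mul, hQ]; simp
    have hQR : Q * (1 - Q) = 0 := by rw [mul_sub, mul_one, hQ, sub_self]
    have hRQ : (1 - Q) * Q = 0 := by rw [sub_mul, one_mul, hQ, sub_self]
    simp only [Prod.fst_mul, Prod.snd_mul, add_mul, mul_add,
      smul_mul_smul_comm, hQ, hR, hQR, hRQ, smul_zero, add_zero, zero_add]
  map_zero' := by simp
  map_add' p q := by
    simp only [Prod.fst_add, Prod.snd_add]
    module
  commutes' c := by
    have h : algebraMap ℂ (ℂ × ℂ) c = (c, c) := by ext <;> simp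
    rw [h]
    show c • Q + c • (1 - Q) = algebraMap ℂ (Matrix (Fin d) (Fin d) ℂ) c
    rw [Algebra.algebraMap_eq_smul_one]
    module

theorem exp_smul_idem (Q : Matrix (Fin d) (Fin d) ℂ) (hQ : Q * Q = Q) (z : ℂ) :
    exp (z • Q) = 1 + (Complex.exp z - 1) • Q := by
  have hcont : Continuous (idemHom Q hQ) := by
    show Continuous fun p : ℂ × ℂ => p.1 • Q + p.2 • (1 - Q)
    fun_prop
  have h1 : z • Q = idemHom Q hQ (z, 0) := by simp [idemHom]
  rw [h1]; refine (map_exp (idemHom Q hQ) hcont _).symm.trans ?_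
  have h2 : exp ((z, 0) : ℂ × ℂ) = (Complex.exp z, 1) := by
    ext
    · rw [Prod.fst_exp]; exact (Complex.exp_eq_exp_ℂ ▸ rfl)
    · rw [Prod.snd_exp]; exact exp_zero
  rw [h2]
  show Complex.exp z • Q + (1:ℂ) • (1 - Q) = _
  module

/-- exp of a combination of orthogonal idempotents. -/
theorem exp_orth (Qp Qm : Matrix (Fin d) (Fin d) ℂ) (hQp : Qp * Qp = Qp)
    (hQm : Qm * Qm = Qm) (hQpQm : Qp * Qm = 0) (hQmQp : Qm * Qp = 0) (w v : ℂ) :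
    exp (w • Qp + v • Qm) =
      1 + (Complex.exp w - 1) • Qp + (Complex.exp v - 1) • Qm := by
  have hcomm : Commute (w • Qp) (v • Qm) := by
    show _ = _
    rw [smul_mul_smul_comm, smul_mul_smul_comm, hQpQm, hQmQp, smul_zero, smul_zero]
  rw [Matrix.exp_add_of_commute _ _ hcomm, exp_smul_idem _ hQp, exp_smul_idem _ hQm,
    add_mul, mul_add, mul_add, one_mul, mul_one, smul_mul_smul_comm, hQpQm, smul_zero]
  simp only [one_mul, add_zero]
  module

/-- Exponential of `w • B` when `B² = Q`, `QB = BQ = B`, `Q² = Q`. -/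
theorem exp_smul_invol (Q B : Matrix (Fin d) (Fin d) ℂ) (hQQ : Q * Q = Q)
    (hQB : Q * B = B) (hBQ : B * Q = B) (hBB : B * B = Q) (w : ℂ) :
    exp (w • B) =
      1 + (Complex.exp w - 1) • ((2⁻¹ : ℂ) • (Q + B)) +
        (Complex.exp (-w) - 1) • ((2⁻¹ : ℂ) • (Q - B)) := by
  have hQp : ((2⁻¹:ℂ) • (Q + B)) * ((2⁻¹:ℂ) • (Q + B)) = (2⁻¹:ℂ) • (Q + B) := by
    rw [smul_mul_smul_comm, mul_add, add_mul, add_mul, hQQ, hQB, hBQ, hBB]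
    module
  have hQm : ((2⁻¹:ℂ) • (Q - B)) * ((2⁻¹:ℂ) • (Q - B)) = (2⁻¹:ℂ) • (Q - B) := by
    rw [smul_mul_smul_comm, mul_sub, sub_mul, sub_mul, hQQ, hQB, hBQ, hBB]
    module
  have hQpQm : ((2⁻¹:ℂ) • (Q + B)) * ((2⁻¹:ℂ) • (Q - B)) = 0 := by
    rw [smul_mul_smul_comm, mul_sub, add_mul, add_mul, hQQ, hQB, hBQ, hBB]
    module
  have hsplit : w • B = w • ((2⁻¹:ℂ) • (Q + B)) + (-w) • ((2⁻¹:ℂ) • (Q - B)) := by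
    module
  have hQmQp : ((2⁻¹:ℂ) • (Q - B)) * ((2⁻¹:ℂ) • (Q + B)) = 0 := by
    rw [smul_mul_smul_comm, mul_add, sub_mul, sub_mul, hQQ, hQB, hBQ, hBB]
    module
  rw [hsplit, exp_orth _ _ hQp hQm hQpQm hQmQp]

end SwapAux

/-- **Edge propagation by SWAP gates.** Conjugating `B_{m,k}` by the SWAP gate on
`(n,m)` produces `B_{n,k}` up to conjugation by a diagonal phase. -/
theorem swap_propagates_edge (d : ℕ) (hd : 3 ≤ d) (n m k : Fin d)
    (hnm : n ≠ m) (hnk : n ≠ k) (hmk : m ≠ k) :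
    NormedSpace.exp ((Complex.I * ((Real.pi / 2 : ℝ) : ℂ)) • bMat d n m) *
        bMat d m k *
        NormedSpace.exp ((-(Complex.I * ((Real.pi / 2 : ℝ) : ℂ))) • bMat d n m) =
      NormedSpace.exp ((Complex.I * ((Real.pi / 2 : ℝ) : ℂ)) • pMat d n) *
        bMat d n k *
        NormedSpace.exp ((-(Complex.I * ((Real.pi / 2 : ℝ) : ℂ))) • pMat d n) := by
  have hez : Complex.exp (Complex.I * ((Real.pi / 2 : ℝ) : ℂ)) = Complex.I := by
    rw [mul_comm, Complex.exp_mul_I, ← Complex.ofReal_cos, ← Complex.ofReal_sin,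
      Real.cos_pi_div_two, Real.sin_pi_div_two]
    simp
  have hez' : Complex.exp (-(Complex.I * ((Real.pi / 2 : ℝ) : ℂ))) = -Complex.I := by
    rw [Complex.exp_neg, hez, Complex.inv_I]
  have hP : pMat d n * pMat d n = pMat d n := by
    simp [pMat, Matrix.single_mul_single_same]
  have hBB : bMat d n m * bMat d n m = pMat d n + pMat d m := by
    simp [bMat, pMat, add_mul, mul_add, Matrix.single_mul_single_same,
      Matrix.single_mul_single_of_ne, hnm, hnm.symm, add_comm]
  have hQB : (pMat d n + pMat d m) * bMat d n m = bMat d n m := by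
    simp [bMat, pMat, add_mul, mul_add, Matrix.single_mul_single_same,
      Matrix.single_mul_single_of_ne, hnm, hnm.symm, add_comm]
  have hBQ : bMat d n m * (pMat d n + pMat d m) = bMat d n m := by
    simp [bMat, pMat, add_mul, mul_add, Matrix.single_mul_single_same,
      Matrix.single_mul_single_of_ne, hnm, hnm.symm, add_comm]
  have hQQ : (pMat d n + pMat d m) * (pMat d n + pMat d m) = pMat d n + pMat d m := by
    simp [pMat, add_mul, mul_add, Matrix.single_mul_single_same,
      Matrix.single_mul_single_of_ne, hnm, hnm.symm]
  rw [SwapAux.exp_smul_idem _ hP, SwapAux.exp_smul_idem _ hP,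
    SwapAux.exp_smul_invol _ _ hQQ hQB hBQ hBB, SwapAux.exp_smul_invol _ _ hQQ hQB hBQ hBB,
    neg_neg, hez, hez']
  simp only [pMat, bMat, smul_add, smul_sub, smul_smul]
  simp only [add_mul, mul_add, sub_mul, mul_sub, smul_mul_assoc, mul_smul_comm, smul_smul,
    one_mul, mul_one, Matrix.single_mul_single_same, Matrix.single_mul_single_of_ne,
    hnm, hnm.symm, hnk, hnk.symm, hmk, hmk.symm, ne_eq, not_false_iff, smul_zero, mul_zero,
    zero_mul, add_zero, zero_add, sub_zero, zero_sub]
  match_scalars <;> ring_nf <;> simp [Complex.I_sq] <;> ring_nf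


end
end

section
/- Let H₀, H₁, …, H_K be Hermitian d×d complex matrices, let f₁, …, f_K : ℝ → ℝ, let T ≥ 0, and let U : ℝ → (d×d complex matrices) satisfy U(0) = 1 and, for every t ∈ [0, T], the Schrödinger equation U'(t) = −i (H₀ + Σ_{k=1}^K f_k(t) H_k) U(t) (where U is differentiable at every such t, and each f_k is continuous on [0,T]). Suppose V is a unitary d×d matrix commuting with every control: H_k V = V H_k for all k = 1, …, K. Then ‖U(T) V − V U(T)‖ ≤ T · ‖H₀ V − V H₀‖, where ‖A‖ := √(tr(AᴴA)) is the Frobenius norm. -/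
open Matrix Complex

noncomputable section

attribute [local instance] Matrix.frobeniusNormedAddCommGroup Matrix.frobeniusNormedSpace

/-- Frobenius (Hilbert–Schmidt) norm `‖A‖ = √(tr(AᴴA))`. -/
def frob {d : ℕ} (A : Matrix (Fin d) (Fin d) ℂ) : ℝ :=
  Real.sqrt ((Aᴴ * A).trace.re)

attribute [local instance] Matrix.frobeniusNormedRing Matrix.frobeniusNormedAlgebra

lemma frob_eq_norm {d : ℕ} (A : Matrix (Fin d) (Fin d) ℂ) : frob A = ‖A‖ := by
  rw [frob, Matrix.frobenius_norm_def, Real.sqrt_eq_rpow]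
  congr 1
  rw [Matrix.trace, Complex.re_sum]
  rw [Finset.sum_comm]
  refine Finset.sum_congr rfl fun i _ => ?_
  rw [Matrix.diag_apply, Matrix.mul_apply, Complex.re_sum]
  refine Finset.sum_congr rfl fun j _ => ?_
  rw [Matrix.conjTranspose_apply]
  simp [Real.rpow_two, ← Complex.normSq_eq_norm_sq, Complex.normSq_apply,
    Complex.mul_re]

lemma norm_mul_right {d : ℕ} (X W : Matrix (Fin d) (Fin d) ℂ) (hW : W * Wᴴ = 1) :
    ‖X * W‖ = ‖X‖ := by
  rw [← frob_eq_norm, ← frob_eq_norm, frob, frob]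
  congr 2
  rw [conjTranspose_mul, Matrix.trace_mul_comm, ← mul_assoc, mul_assoc X, hW, mul_one,
    Matrix.trace_mul_comm]

lemma norm_mul_left {d : ℕ} (X W : Matrix (Fin d) (Fin d) ℂ) (hW : Wᴴ * W = 1) :
    ‖W * X‖ = ‖X‖ := by
  rw [← frob_eq_norm, ← frob_eq_norm, frob, frob]
  congr 2
  rw [conjTranspose_mul, mul_assoc, ← mul_assoc Wᴴ, hW, one_mul]

/-- **Speed limit from symmetries of the controls.** If `U` solves the controlled
Schrödinger equation `U' = −i(H₀ + ∑ₖ fₖ(t) Hₖ)U`, `U(0) = 1`, and the unitary `V`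
commutes with every control Hamiltonian `Hₖ`, then
`‖U(T)V − VU(T)‖ ≤ T‖H₀V − VH₀‖` in the Frobenius norm. -/
theorem commutator_speed_limit (d K : ℕ)
    (H₀ : Matrix (Fin d) (Fin d) ℂ) (hH₀ : H₀ᴴ = H₀)
    (Hc : Fin K → Matrix (Fin d) (Fin d) ℂ) (hHc : ∀ k, (Hc k)ᴴ = Hc k)
    (f : Fin K → ℝ → ℝ) (T : ℝ) (hT : 0 ≤ T)
    (hf : ∀ k, ContinuousOn (f k) (Set.Icc 0 T))
    (U : ℝ → Matrix (Fin d) (Fin d) ℂ) (hU0 : U 0 = 1)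
    (hU : ∀ t ∈ Set.Icc (0 : ℝ) T,
      HasDerivAt U
        ((-Complex.I) • ((H₀ + ∑ k : Fin K, ((f k t : ℝ) : ℂ) • Hc k) * U t)) t)
    (V : Matrix (Fin d) (Fin d) ℂ) (hV : Vᴴ * V = 1)
    (hVcomm : ∀ k, Hc k * V = V * Hc k) :
    frob (U T * V - V * U T) ≤ T * frob (H₀ * V - V * H₀) := by
  set Ht : ℝ → Matrix (Fin d) (Fin d) ℂ :=
    fun t => H₀ + ∑ k : Fin K, ((f k t : ℝ) : ℂ) • Hc k with hHt
  have hHt_herm : ∀ t, (Ht t)ᴴ = Ht t := by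
    intro t
    simp only [hHt, conjTranspose_add, conjTranspose_sum, conjTranspose_smul, hH₀, hHc,
      Complex.star_def, Complex.conj_ofReal]
  -- derivative of star ∘ U
  have hUs : ∀ t ∈ Set.Icc (0 : ℝ) T,
      HasDerivAt (fun s => star (U s))
        (Complex.I • (star (U t) * Ht t)) t := by
    intro t ht
    have := (hU t ht).star
    convert this using 1
    iterate 3 rfl
    have hHtstar : star (H₀ + ∑ k : Fin K, ((f k t : ℝ) : ℂ) • Hc k) = Ht t := by
      rw [Matrix.star_eq_conjTranspose]; exact hHt_herm t
    rw [star_smul, Matrix.star_mul, hHtstar]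
    simp only [star_neg, Complex.star_def, Complex.conj_I, neg_neg]
  -- unitarity of U on [0,T]
  have hunit : ∀ t ∈ Set.Icc (0 : ℝ) T, star (U t) * U t = 1 := by
    have hP : ∀ t ∈ Set.Icc (0 : ℝ) T,
        HasDerivWithinAt (fun s => star (U s) * U s) 0 (Set.Icc 0 T) t := by
      intro t ht
      have h := ((hUs t ht).mul (hU t ht)).hasDerivWithinAt (s := Set.Icc 0 T)
      convert h using 1
      iterate 4 rfl
      show (0 : Matrix (Fin d) (Fin d) ℂ) =
        I • (star (U t) * Ht t) * U t + star (U t) * (-I) • (Ht t * U t)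
      rw [smul_mul_assoc, mul_smul_comm, mul_assoc, neg_smul, add_neg_cancel]
    intro t ht
    have h0 : (0:ℝ) ∈ Set.Icc (0:ℝ) T := Set.left_mem_Icc.2 hT
    have := (convex_Icc (0:ℝ) T).norm_image_sub_le_of_norm_hasDerivWithin_le
      (C := 0) (f' := fun _ => 0) hP (fun x _ => by rw [norm_zero]) h0 ht
    simp only [norm_zero, zero_mul] at this
    have heq : star (U t) * U t = star (U 0) * U 0 := by
      have := norm_sub_eq_zero_iff.mp (le_antisymm this (norm_nonneg _))
      exact this
    rw [heq, hU0, star_one, one_mul]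
  have hunit' : ∀ t ∈ Set.Icc (0 : ℝ) T, U t * star (U t) = 1 := fun t ht =>
    mul_eq_one_comm.mp (hunit t ht)
  -- the interaction-picture commutant
  set C : Matrix (Fin d) (Fin d) ℂ := H₀ * V - V * H₀ with hC
  set g : ℝ → Matrix (Fin d) (Fin d) ℂ := fun t => star (U t) * (V * U t) with hg
  have hg' : ∀ t ∈ Set.Icc (0 : ℝ) T,
      HasDerivWithinAt g (Complex.I • (star (U t) * (C * U t))) (Set.Icc 0 T) t := by
    intro t ht
    have h2 : HasDerivAt (fun s => V * U s)
        (V * ((-Complex.I) • (Ht t * U t))) t := (hU t ht).const_mul V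
    have h := ((hUs t ht).mul h2).hasDerivWithinAt (s := Set.Icc 0 T)
    convert h using 1
    iterate 4 rfl
    have hcomm : Ht t * V - V * Ht t = C := by
      simp only [hHt, hC, add_mul, mul_add, Finset.sum_mul, Finset.mul_sum, smul_mul_assoc,
        mul_smul_comm, hVcomm]
      abel
    show I • (star (U t) * (C * U t)) =
      I • (star (U t) * Ht t) * (V * U t) + star (U t) * (V * (-I) • (Ht t * U t))
    rw [smul_mul_assoc, mul_smul_comm, mul_smul_comm, neg_smul, ← smul_neg, ← smul_add]
    congr 1
    rw [← hcomm]
    noncomm_ring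
  have hCnorm : ∀ t ∈ Set.Icc (0 : ℝ) T,
      ‖Complex.I • (star (U t) * (C * U t))‖ ≤ ‖C‖ := by
    intro t ht
    rw [norm_smul, Complex.norm_I, one_mul]
    rw [norm_mul_left _ _ (by rw [← Matrix.star_eq_conjTranspose, star_star]; exact hunit' t ht)]
    rw [norm_mul_right _ _ (by rw [← Matrix.star_eq_conjTranspose]; exact hunit' t ht)]
  have h0 : (0:ℝ) ∈ Set.Icc (0:ℝ) T := Set.left_mem_Icc.2 hT
  have hTmem : T ∈ Set.Icc (0:ℝ) T := Set.right_mem_Icc.2 hT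
  have hmvt := (convex_Icc (0:ℝ) T).norm_image_sub_le_of_norm_hasDerivWithin_le
    (f' := fun t => Complex.I • (star (U t) * (C * U t))) hg' hCnorm h0 hTmem
  rw [sub_zero, Real.norm_of_nonneg hT] at hmvt
  have hg0 : g 0 = V := by rw [hg]; simp [hU0]
  have hkey : U T * V - V * U T = U T * (g 0 - g T) := by
    rw [hg0, hg, mul_sub, ← mul_assoc, ← mul_assoc, hunit' T hTmem, one_mul]
  rw [hkey, frob_eq_norm, frob_eq_norm,
    norm_mul_left _ _ (by rw [← Matrix.star_eq_conjTranspose]; exact hunit T hTmem),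
    norm_sub_rev]
  calc ‖g T - g 0‖ ≤ ‖C‖ * T := hmvt
    _ = T * ‖C‖ := mul_comm _ _


end
end

section
/- Let d ≥ 2, J := 1/√(2(d−1)), and H₀ := J Σ_{j=0}^{d−2} B_{j,j+1}. Let f : ℝ → (Fin d → ℝ) be control fields continuous on [0,T], T ≥ 0, and let U : ℝ → (d×d complex matrices) satisfy U(0) = 1 and, for every t ∈ [0,T], U'(t) = −i (H₀ + Σ_{j∈Fin d} f_j(t) P_j) U(t). If U(T) = exp(−i(π/2) B_{0,d−1}) (the SWAP operation between the first and last levels), then T ≥ √2 (d−1). -/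
open Matrix Complex Real

noncomputable section

attribute [local instance] Matrix.frobeniusNormedAddCommGroup Matrix.frobeniusNormedSpace

/-- The tight-binding drift Hamiltonian `H₀ = J ∑_{j=0}^{d−2} B_{j,j+1}` with
`J = 1/√(2(d−1))`. -/
def tightBinding (d : ℕ) : Matrix (Fin d) (Fin d) ℂ :=
  (1 / Real.sqrt (2 * ((d : ℝ) - 1))) •
    ∑ j : Fin (d - 1),
      bMat d ⟨j.val, lt_of_lt_of_le j.isLt (Nat.sub_le d 1)⟩
             ⟨j.val + 1, by have h := j.isLt; omega⟩

/-! ### Auxiliary lemmas -/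

open scoped Nat

lemma bMat_cube (d : ℕ) (n m : Fin d) (h : n ≠ m) :
    bMat d n m * bMat d n m * bMat d n m = bMat d n m := by
  simp [bMat, add_mul, mul_add, Matrix.single_mul_single_of_ne,
    Matrix.single_mul_single_same, h, h.symm]

lemma bMat_pow_odd (d : ℕ) (n m : Fin d) (h : n ≠ m) (k : ℕ) :
    bMat d n m ^ (2 * k + 1) = bMat d n m := by
  induction k with
  | zero => simp
  | succ k ih =>
      have : 2 * (k+1) + 1 = (2*k+1) + 2 := by ring
      rw [this, pow_add, ih, pow_two, ← mul_assoc, bMat_cube d n m h]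

lemma bMat_pow_even_apply (d : ℕ) (n m : Fin d) (h : n ≠ m) (k : ℕ) :
    (bMat d n m ^ (2 * k)) m n = 0 := by
  cases k with
  | zero => simp [Matrix.one_apply, h.symm]
  | succ k =>
      have : 2 * (k+1) = (2*k+1) + 1 := by ring
      rw [this, pow_succ, bMat_pow_odd d n m h k]
      simp [bMat, mul_add, add_mul, Matrix.single_mul_single_of_ne,
        Matrix.single_mul_single_same, h, h.symm, Matrix.add_apply,
        Matrix.single_apply_of_ne, Ne.symm h]

lemma expEntry (d : ℕ) (n m : Fin d) (h : n ≠ m) :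
    (NormedSpace.exp ((-(Complex.I * ((Real.pi / 2 : ℝ) : ℂ))) • bMat d n m)) m n
      = -Complex.I := by
  set z : ℂ := -(Complex.I * ((Real.pi / 2 : ℝ) : ℂ)) with hz
  set A := z • bMat d n m with hA
  have hsum : HasSum (fun nn : ℕ => ((nn ! : ℂ)⁻¹) • A ^ nn) (NormedSpace.exp A) := by
    letI : NormedRing (Matrix (Fin d) (Fin d) ℂ) := Matrix.frobeniusNormedRing
    letI : NormedAlgebra ℂ (Matrix (Fin d) (Fin d) ℂ) := Matrix.frobeniusNormedAlgebra
    exact NormedSpace.exp_series_hasSum_exp' A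
  have hentry : HasSum (fun nn : ℕ => (((nn ! : ℂ)⁻¹) • A ^ nn) m n)
      ((NormedSpace.exp A) m n) := Pi.hasSum.mp (Pi.hasSum.mp hsum m) n
  have hBmn : bMat d n m m n = 1 := by
    simp [bMat, Matrix.add_apply, Matrix.single_apply_same,
      Matrix.single_apply_of_ne, h]
  have hodd : ∀ k : ℕ, (((((2*k+1)! : ℂ))⁻¹) • A ^ (2*k+1)) m n
      = -Complex.I * ((-1)^k * ((Real.pi/2 : ℝ):ℂ)^(2*k+1) / ((2*k+1)! : ℂ)) := by
    intro k
    rw [hA, smul_pow, bMat_pow_odd d n m h k, Matrix.smul_apply, Matrix.smul_apply, hBmn]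
    have hzp : z ^ (2*k+1) = -Complex.I * ((-1)^k * ((Real.pi/2 : ℝ):ℂ)^(2*k+1)) := by
      rw [hz, Odd.neg_pow ⟨k, by ring⟩, mul_pow]
      have : Complex.I ^ (2*k+1) = (-1)^k * Complex.I := by
        rw [pow_succ, pow_mul, Complex.I_sq]
      rw [this]; ring
    rw [hzp]
    simp only [smul_eq_mul]
    ring
  have heven : ∀ k : ℕ, (((((2*k)! : ℂ))⁻¹) • A ^ (2*k)) m n = 0 := by
    intro k
    rw [hA, smul_pow, Matrix.smul_apply, Matrix.smul_apply, bMat_pow_even_apply d n m h k]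
    simp
  have hsin : HasSum
      (fun k : ℕ => -Complex.I * ((-1)^k * ((Real.pi/2 : ℝ):ℂ)^(2*k+1) / ((2*k+1)! : ℂ)))
      (-Complex.I) := by
    have := (Complex.hasSum_sin (((Real.pi/2 : ℝ) : ℂ))).mul_left (-Complex.I)
    simpa [Complex.sin_pi_div_two, Complex.ofReal_div] using this
  have hmain : HasSum (fun nn : ℕ => (((nn ! : ℂ)⁻¹) • A ^ nn) m n) (-Complex.I) := by
    have hinj : Function.Injective (fun k : ℕ => 2*k+1) := by
      intro a b hab; simp only at hab; omega
    have h0 : ∀ nn ∉ Set.range (fun k : ℕ => 2*k+1),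
        (((nn ! : ℂ)⁻¹) • A ^ nn) m n = 0 := by
      intro nn hnn
      have hev : Even nn := by
        rcases Nat.even_or_odd nn with he | ho
        · exact he
        · rcases ho with ⟨k, hk⟩
          exact absurd ⟨k, by simp only; omega⟩ hnn
      rcases hev with ⟨k, hk⟩
      have : nn = 2*k := by omega
      rw [this]; exact heven k
    apply (hinj.hasSum_iff h0).mp
    have hcomp : ((fun nn : ℕ => (((nn ! : ℂ)⁻¹) • A ^ nn) m n) ∘ (fun k : ℕ => 2*k+1))
        = fun k : ℕ => -Complex.I * ((-1)^k * ((Real.pi/2 : ℝ):ℂ)^(2*k+1) / ((2*k+1)! : ℂ)) :=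
      funext fun k => hodd k
    rw [hcomp]; exact hsin
  exact hentry.unique hmain

def entryCLM (d : ℕ) (i j : Fin d) : Matrix (Fin d) (Fin d) ℂ →L[ℝ] ℂ where
  toFun M := M i j
  map_add' _ _ := rfl
  map_smul' _ _ := rfl
  cont := ((continuous_apply j).comp (continuous_apply i) : _)

lemma hasDerivAt_normSq {ψ : ℝ → ℂ} {w : ℂ} {t : ℝ} (h : HasDerivAt ψ w t) :
    HasDerivAt (fun s => Complex.normSq (ψ s)) (2 * ((starRingEnd ℂ) (ψ t) * w).re) t := by
  have hre : HasDerivAt (fun s => (ψ s).re) w.re t :=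
    (Complex.reCLM.hasFDerivAt.comp_hasDerivAt t h : _)
  have him : HasDerivAt (fun s => (ψ s).im) w.im t :=
    (Complex.imCLM.hasFDerivAt.comp_hasDerivAt t h : _)
  have h2 := (hre.mul hre).add (him.mul him)
  have h3 : 2 * ((starRingEnd ℂ) (ψ t) * w).re
      = w.re * (ψ t).re + (ψ t).re * w.re + (w.im * (ψ t).im + (ψ t).im * w.im) := by
    simp [Complex.mul_re, Complex.conj_re, Complex.conj_im]; ring
  rw [h3]
  simp only [Complex.normSq_apply]
  exact h2

lemma sum_std (d : ℕ) (x : Fin d → ℝ) (g : Fin d → ℂ) (M : Matrix (Fin d) (Fin d) ℂ)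
    (a b n0 : Fin d) :
    ∑ j : Fin d, x j * (2 * ((g j) * ((Matrix.single a b (1:ℂ) * M) j n0)).im)
      = x a * (2 * (g a * (M b n0)).im) := by
  rw [Finset.sum_eq_single a]
  · rw [Matrix.single_mul_apply_same, one_mul]
  · intro j _ hj
    simp [Matrix.single_mul_apply_of_ne, hj]
  · simp

lemma re_mul_neg_I (z w : ℂ) : (z * (-Complex.I * w)).re = (z * w).im := by
  simp [Complex.mul_re, Complex.mul_im]; ring

lemma im_conj_swap (a b : ℂ) :
    ((starRingEnd ℂ) a * b).im = -(((starRingEnd ℂ) b) * a).im := by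
  simp [Complex.mul_im]; ring

lemma im_conj_self (a z : ℂ) (hz : z.im = 0) : ((starRingEnd ℂ) a * (z * a)).im = 0 := by
  simp [Complex.mul_im, Complex.mul_re, hz]; ring

lemma master (d : ℕ) (x : Fin d → ℝ) (F : Fin d → ℝ)
    (U : ℝ → Matrix (Fin d) (Fin d) ℂ) (t : ℝ) (n0 : Fin d)
    (hD : HasDerivAt U ((-Complex.I) •
      ((tightBinding d + ∑ j : Fin d, ((F j : ℝ) : ℂ) • pMat d j) * U t)) t) :
    HasDerivAt (fun s => ∑ j : Fin d, x j * Complex.normSq (U s j n0))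
      (∑ m : Fin (d - 1),
        (x ⟨m.val, lt_of_lt_of_le m.isLt (Nat.sub_le d 1)⟩
          - x ⟨m.val + 1, by have h := m.isLt; omega⟩) *
        (2 * (1 / Real.sqrt (2 * ((d : ℝ) - 1))) *
          ((starRingEnd ℂ) (U t ⟨m.val, lt_of_lt_of_le m.isLt (Nat.sub_le d 1)⟩ n0)
            * U t ⟨m.val + 1, by have h := m.isLt; omega⟩ n0).im)) t := by
  classical
  set H : Matrix (Fin d) (Fin d) ℂ :=
    tightBinding d + ∑ j : Fin d, ((F j : ℝ) : ℂ) • pMat d j with hH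
  set ψ : Fin d → ℂ := fun j => U t j n0 with hψ
  have hDj : ∀ j : Fin d, HasDerivAt (fun s => U s j n0)
      (((-Complex.I) • (H * U t)) j n0) t :=
    fun j => ((entryCLM d j n0).hasFDerivAt.comp_hasDerivAt t hD : _)
  have hG : HasDerivAt (fun s => ∑ j : Fin d, x j * Complex.normSq (U s j n0))
      (∑ j : Fin d, x j *
        (2 * ((starRingEnd ℂ) (ψ j) * (((-Complex.I) • (H * U t)) j n0)).re)) t :=
    HasDerivAt.fun_sum (fun j _ => (hasDerivAt_normSq (hDj j)).const_mul (x j))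
  convert hG using 1
  have hstep1 : ∀ j : Fin d,
      x j * (2 * ((starRingEnd ℂ) (ψ j) * (((-Complex.I) • (H * U t)) j n0)).re)
        = x j * (2 * ((starRingEnd ℂ) (ψ j) * ((H * U t) j n0)).im) := by
    intro j
    rw [Matrix.smul_apply, smul_eq_mul, re_mul_neg_I]
  rw [show (∑ j : Fin d, x j *
        (2 * ((starRingEnd ℂ) (ψ j) * (((-Complex.I) • (H * U t)) j n0)).re))
      = ∑ j : Fin d, x j * (2 * ((starRingEnd ℂ) (ψ j) * ((H * U t) j n0)).im)
    from Finset.sum_congr rfl (fun j _ => hstep1 j)]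
  set Φ : Matrix (Fin d) (Fin d) ℂ → ℝ :=
    fun M => ∑ j : Fin d, x j * (2 * ((starRingEnd ℂ) (ψ j) * ((M * U t) j n0)).im) with hΦ
  have Φadd : ∀ M N, Φ (M + N) = Φ M + Φ N := by
    intro M N
    simp only [hΦ, Matrix.add_mul, Matrix.add_apply, mul_add, Complex.add_im]
    rw [← Finset.sum_add_distrib]
  have Φsmul : ∀ (r : ℝ) (M), Φ ((r : ℂ) • M) = r * Φ M := by
    intro r M
    simp only [hΦ, Matrix.smul_mul, Matrix.smul_apply, smul_eq_mul, Finset.mul_sum]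
    refine Finset.sum_congr rfl (fun j _ => ?_)
    have : ((starRingEnd ℂ) (ψ j) * ((r:ℂ) * (M * U t) j n0)).im
        = r * ((starRingEnd ℂ) (ψ j) * ((M * U t) j n0)).im := by
      simp [Complex.mul_im, Complex.mul_re]; ring
    rw [this]; ring
  have Φrsmul : ∀ (r : ℝ) (M), Φ (r • M) = r * Φ M := by
    intro r M
    have : (r • M : Matrix (Fin d) (Fin d) ℂ) = (r : ℂ) • M := by
      ext a b; simp [Complex.real_smul]
    rw [this]; exact Φsmul r M
  have Φstd : ∀ a b : Fin d, Φ (Matrix.single a b (1:ℂ))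
      = x a * (2 * ((starRingEnd ℂ) (ψ a) * ψ b).im) := by
    intro a b
    exact sum_std d x (fun j => (starRingEnd ℂ) (ψ j)) (U t) a b n0
  have ΦaddHom : ∀ (s : Finset (Fin d)) (Ms : Fin d → Matrix (Fin d) (Fin d) ℂ),
      Φ (∑ l ∈ s, Ms l) = ∑ l ∈ s, Φ (Ms l) := by
    intro s Ms
    induction s using Finset.induction_on with
    | empty => simp [hΦ]
    | insert _ _ hnotmem ih =>
        rw [Finset.sum_insert hnotmem, Finset.sum_insert hnotmem, Φadd, ih]
  have ΦaddHom' : ∀ (s : Finset (Fin (d-1))) (Ms : Fin (d-1) → Matrix (Fin d) (Fin d) ℂ),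
      Φ (∑ l ∈ s, Ms l) = ∑ l ∈ s, Φ (Ms l) := by
    intro s Ms
    induction s using Finset.induction_on with
    | empty => simp [hΦ]
    | insert _ _ hnotmem ih =>
        rw [Finset.sum_insert hnotmem, Finset.sum_insert hnotmem, Φadd, ih]
  have hcontrol : Φ (∑ j : Fin d, ((F j : ℝ) : ℂ) • pMat d j) = 0 := by
    rw [ΦaddHom]
    refine Finset.sum_eq_zero (fun l _ => ?_)
    rw [Φsmul, pMat, Φstd]
    rw [show ((starRingEnd ℂ) (ψ l) * ψ l).im = 0 by
      simpa using im_conj_self (ψ l) 1 (by simp)]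
    ring
  have htb : Φ (tightBinding d) = ∑ m : Fin (d - 1),
        (x ⟨m.val, lt_of_lt_of_le m.isLt (Nat.sub_le d 1)⟩
          - x ⟨m.val + 1, by have h := m.isLt; omega⟩) *
        (2 * (1 / Real.sqrt (2 * ((d : ℝ) - 1))) *
          ((starRingEnd ℂ) (ψ ⟨m.val, lt_of_lt_of_le m.isLt (Nat.sub_le d 1)⟩)
            * ψ ⟨m.val + 1, by have h := m.isLt; omega⟩).im) := by
    rw [tightBinding, Φrsmul, ΦaddHom', Finset.mul_sum]
    refine Finset.sum_congr rfl (fun m _ => ?_)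
    rw [bMat, Φadd, Φstd, Φstd]
    rw [im_conj_swap (ψ ⟨m.val + 1, by have h := m.isLt; omega⟩)]
    ring
  symm
  rw [show (∑ j : Fin d, x j * (2 * ((starRingEnd ℂ) (ψ j) * ((H * U t) j n0)).im))
      = Φ H from rfl, hH, Φadd, hcontrol, htb, add_zero]

/-- **Lower bound for the SWAP gate in the tight-binding system.** If the controlled
tight-binding system implements the SWAP operation `exp(−i(π/2)B_{0,d−1})` between the
first and the last level at time `T`, then `T ≥ √2 (d−1)`. -/
theorem swap_lower_bound (d : ℕ) (hd : 2 ≤ d)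
    (f : ℝ → Fin d → ℝ) (T : ℝ) (hT : 0 ≤ T)
    (hf : ∀ j, ContinuousOn (fun t => f t j) (Set.Icc 0 T))
    (U : ℝ → Matrix (Fin d) (Fin d) ℂ) (hU0 : U 0 = 1)
    (hU : ∀ t ∈ Set.Icc (0 : ℝ) T,
      HasDerivAt U
        ((-Complex.I) •
          ((tightBinding d + ∑ j : Fin d, ((f t j : ℝ) : ℂ) • pMat d j) * U t)) t)
    (hUT : U T = NormedSpace.exp ((-(Complex.I * ((Real.pi / 2 : ℝ) : ℂ))) •
      bMat d ⟨0, by omega⟩ ⟨d - 1, by omega⟩)) :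
    Real.sqrt 2 * ((d : ℝ) - 1) ≤ T := by
  classical
  have hd1 : (0:ℝ) < (d:ℝ) - 1 := by
    have h2d : (2:ℝ) ≤ (d:ℝ) := by exact_mod_cast hd
    linarith
  have hsq : (0:ℝ) < Real.sqrt (2 * ((d:ℝ) - 1)) :=
    Real.sqrt_pos.mpr (by linarith)
  set Jr : ℝ := 1 / Real.sqrt (2 * ((d : ℝ) - 1)) with hJrdef
  have hJrpos : 0 < Jr := one_div_pos.mpr hsq
  let n0 : Fin d := ⟨0, by omega⟩
  let nd : Fin d := ⟨d - 1, by omega⟩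
  have hne : n0 ≠ nd := by
    intro hcon
    have := congrArg Fin.val hcon
    simp only [n0, nd] at this
    omega
  -- weight profiles
  let δ : ℕ → ℝ := fun m => Real.sqrt (((m:ℝ)+1) * ((d:ℝ)-1-(m:ℝ)))
  let xw : ℕ → ℝ := fun nn => ∑ m ∈ Finset.range nn, δ m
  have hδnonneg : ∀ m, 0 ≤ δ m := fun m => Real.sqrt_nonneg _
  let x1 : Fin d → ℝ := fun _ => 1
  let xG : Fin d → ℝ := fun j => xw j.val
  -- population functions
  let Nf : ℝ → ℝ := fun s => ∑ j : Fin d, x1 j * Complex.normSq (U s j n0)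
  let G : ℝ → ℝ := fun s => ∑ j : Fin d, xG j * Complex.normSq (U s j n0)
  -- derivative of Nf is zero
  have hNd : ∀ u ∈ Set.Icc (0:ℝ) T, HasDerivAt Nf 0 u := by
    intro u hu
    have h := master d x1 (f u) U u n0 (hU u hu)
    simpa [x1, Nf] using h
  -- Nf is constant equal to 1
  have hN0 : ∀ c : Fin d → ℝ,
      (∑ j : Fin d, c j * Complex.normSq (U 0 j n0)) = c n0 := by
    intro c
    rw [hU0, Finset.sum_eq_single n0]
    · simp [Matrix.one_apply]
    · intro j _ hj
      simp [Matrix.one_apply, hj]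
    · simp
  have hNconst : ∀ u ∈ Set.Icc (0:ℝ) T, Nf u = 1 := by
    intro u hu
    have hbd := (convex_Icc (0:ℝ) T).norm_image_sub_le_of_norm_hasDerivWithin_le
      (f' := fun _ => (0:ℝ)) (C := 0) (fun v hv => (hNd v hv).hasDerivWithinAt)
      (fun v _ => by simp) ⟨le_refl 0, hT⟩ hu
    have : ‖Nf u - Nf 0‖ ≤ 0 := by simpa using hbd
    have heq : Nf u = Nf 0 := by
      have := norm_sub_eq_zero_iff.mp (le_antisymm this (norm_nonneg _))
      exact this
    rw [heq]
    show (∑ j : Fin d, x1 j * Complex.normSq (U 0 j n0)) = 1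
    rw [hN0 x1]
  -- derivative of G
  let Dfun : ℝ → ℝ := fun u => ∑ m : Fin (d - 1),
      (xG ⟨m.val, lt_of_lt_of_le m.isLt (Nat.sub_le d 1)⟩
        - xG ⟨m.val + 1, by have h := m.isLt; omega⟩) *
      (2 * (1 / Real.sqrt (2 * ((d : ℝ) - 1))) *
        ((starRingEnd ℂ) (U u ⟨m.val, lt_of_lt_of_le m.isLt (Nat.sub_le d 1)⟩ n0)
          * U u ⟨m.val + 1, by have h := m.isLt; omega⟩ n0).im)
  have hGd : ∀ u ∈ Set.Icc (0:ℝ) T, HasDerivAt G (Dfun u) u := by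
    intro u hu
    exact master d xG (f u) U u n0 (hU u hu)
  -- bound on the derivative of G
  have hDbound : ∀ u ∈ Set.Icc (0:ℝ) T, ‖Dfun u‖ ≤ Jr * ((d:ℝ) - 1) := by
    intro u hu
    have hNu : (∑ j : Fin d, Complex.normSq (U u j n0)) = 1 := by
      have := hNconst u hu
      simpa [Nf, x1] using this
    set p : Fin d → ℝ := fun j => Complex.normSq (U u j n0) with hpdef
    have hppos : ∀ j, 0 ≤ p j := fun j => Complex.normSq_nonneg _
    rw [Real.norm_eq_abs]
    calc |Dfun u| ≤ ∑ m : Fin (d - 1), |(xG ⟨m.val, lt_of_lt_of_le m.isLt (Nat.sub_le d 1)⟩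
            - xG ⟨m.val + 1, by have h := m.isLt; omega⟩) *
          (2 * (1 / Real.sqrt (2 * ((d : ℝ) - 1))) *
            ((starRingEnd ℂ) (U u ⟨m.val, lt_of_lt_of_le m.isLt (Nat.sub_le d 1)⟩ n0)
              * U u ⟨m.val + 1, by have h := m.isLt; omega⟩ n0).im)| :=
        Finset.abs_sum_le_sum_abs _ _
      _ ≤ ∑ m : Fin (d - 1),
            Jr * ((((d:ℝ)-1-(m.val:ℝ)) * p ⟨m.val, lt_of_lt_of_le m.isLt (Nat.sub_le d 1)⟩)
              + (((m.val:ℝ)+1) * p ⟨m.val + 1, by have h := m.isLt; omega⟩)) := by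
        refine Finset.sum_le_sum (fun m _ => ?_)
        set a : ℝ := (d:ℝ)-1-(m.val:ℝ) with hadef
        set b : ℝ := (m.val:ℝ)+1 with hbdef
        have hmval : (m.val:ℝ) + 1 ≤ (d:ℝ) - 1 := by
          have : m.val + 1 ≤ d - 1 := m.isLt
          have := (Nat.cast_le (α := ℝ)).mpr this
          push_cast at this
          rw [Nat.cast_sub (by omega : 1 ≤ d)] at *
          · push_cast at this ⊢; linarith
        have ha : 0 ≤ a := by rw [hadef]; linarith
        have hb : 0 ≤ b := by rw [hbdef]; positivity
        set pl : ℝ := p ⟨m.val, lt_of_lt_of_le m.isLt (Nat.sub_le d 1)⟩ with hpl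
        set pr : ℝ := p ⟨m.val + 1, by have h := m.isLt; omega⟩ with hpr
        have hplpos : 0 ≤ pl := hppos _
        have hprpos : 0 ≤ pr := hppos _
        -- difference of weights is δ m
        have hxdiff : xG ⟨m.val + 1, by have h := m.isLt; omega⟩
            - xG ⟨m.val, lt_of_lt_of_le m.isLt (Nat.sub_le d 1)⟩ = δ m.val := by
          show xw (m.val + 1) - xw m.val = δ m.val
          rw [show xw (m.val + 1) = xw m.val + δ m.val from Finset.sum_range_succ δ m.val]
          ring
        have habs1 : |xG ⟨m.val, lt_of_lt_of_le m.isLt (Nat.sub_le d 1)⟩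
            - xG ⟨m.val + 1, by have h := m.isLt; omega⟩| = δ m.val := by
          rw [abs_sub_comm, hxdiff]
          exact abs_of_nonneg (hδnonneg _)
        -- |Im| bounded by product of moduli
        have him : |((starRingEnd ℂ) (U u ⟨m.val, lt_of_lt_of_le m.isLt (Nat.sub_le d 1)⟩ n0)
              * U u ⟨m.val + 1, by have h := m.isLt; omega⟩ n0).im|
            ≤ Real.sqrt pl * Real.sqrt pr := by
          refine le_trans (Complex.abs_im_le_norm _) ?_
          rw [norm_mul, Complex.norm_conj, Complex.norm_def,
            Complex.norm_def]
        rw [abs_mul, habs1, abs_mul]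
        have h2Jr : |(2:ℝ) * (1 / Real.sqrt (2 * ((d : ℝ) - 1)))| = 2 * Jr := by
          rw [_root_.abs_of_nonneg (by positivity : (0:ℝ) ≤ 2 * (1 / Real.sqrt (2 * ((d : ℝ) - 1))))]
        rw [h2Jr]
        -- AM-GM step
        have hδm : δ m.val = Real.sqrt b * Real.sqrt a := by
          show Real.sqrt (((m.val:ℝ)+1) * ((d:ℝ)-1-(m.val:ℝ))) = _
          rw [← Real.sqrt_mul hb]
        have key : δ m.val * (2 * Jr * (Real.sqrt pl * Real.sqrt pr))
            ≤ Jr * (a * pl + b * pr) := by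
          have hs1 : Real.sqrt a * Real.sqrt pl = Real.sqrt (a * pl) :=
            (Real.sqrt_mul ha pl).symm
          have hs2 : Real.sqrt b * Real.sqrt pr = Real.sqrt (b * pr) :=
            (Real.sqrt_mul hb pr).symm
          have hamgm : 2 * (Real.sqrt (a * pl) * Real.sqrt (b * pr)) ≤ a * pl + b * pr := by
            nlinarith [sq_nonneg (Real.sqrt (a*pl) - Real.sqrt (b*pr)),
              Real.sq_sqrt (mul_nonneg ha hplpos), Real.sq_sqrt (mul_nonneg hb hprpos)]
          have : δ m.val * (Real.sqrt pl * Real.sqrt pr)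
              = Real.sqrt (a * pl) * Real.sqrt (b * pr) := by
            rw [hδm, ← hs1, ← hs2]; ring
          calc δ m.val * (2 * Jr * (Real.sqrt pl * Real.sqrt pr))
              = Jr * (2 * (Real.sqrt (a*pl) * Real.sqrt (b*pr))) := by
                rw [← this]; ring
            _ ≤ Jr * (a * pl + b * pr) := by
                exact mul_le_mul_of_nonneg_left hamgm hJrpos.le
        calc δ m.val * (2 * Jr *
              |((starRingEnd ℂ) (U u ⟨m.val, lt_of_lt_of_le m.isLt (Nat.sub_le d 1)⟩ n0)
                * U u ⟨m.val + 1, by have h := m.isLt; omega⟩ n0).im|)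
            ≤ δ m.val * (2 * Jr * (Real.sqrt pl * Real.sqrt pr)) := by
              refine mul_le_mul_of_nonneg_left ?_ (hδnonneg _)
              exact mul_le_mul_of_nonneg_left him (by positivity)
          _ ≤ Jr * (a * pl + b * pr) := key
      _ ≤ Jr * ((d:ℝ) - 1) := by
        rw [← Finset.mul_sum]
        refine mul_le_mul_of_nonneg_left ?_ hJrpos.le
        -- split and reindex
        rw [Finset.sum_add_distrib]
        have hL : (∑ m : Fin (d - 1),
              ((d:ℝ)-1-(m.val:ℝ)) * p ⟨m.val, lt_of_lt_of_le m.isLt (Nat.sub_le d 1)⟩)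
            ≤ ∑ j : Fin d, ((d:ℝ)-1-(j.val:ℝ)) * p j := by
          have hinj : ∀ m₁ ∈ (Finset.univ : Finset (Fin (d-1))), ∀ m₂ ∈ Finset.univ,
              (⟨m₁.val, lt_of_lt_of_le m₁.isLt (Nat.sub_le d 1)⟩ : Fin d)
                = ⟨m₂.val, lt_of_lt_of_le m₂.isLt (Nat.sub_le d 1)⟩ → m₁ = m₂ := by
            intro m₁ _ m₂ _ hmm
            have := congrArg Fin.val hmm
            exact Fin.ext this
          refine le_trans (le_of_eq (Finset.sum_image
              (g := fun m : Fin (d-1) =>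
                (⟨m.val, lt_of_lt_of_le m.isLt (Nat.sub_le d 1)⟩ : Fin d))
              (f := fun j : Fin d => ((d:ℝ)-1-(j.val:ℝ)) * p j) hinj).symm)
            (Finset.sum_le_sum_of_subset_of_nonneg (Finset.subset_univ _) ?_)
          intro j _ _
          have : (j.val:ℝ) ≤ (d:ℝ) - 1 := by
            have : j.val + 1 ≤ d := j.isLt
            have := (Nat.cast_le (α := ℝ)).mpr this
            push_cast at this; linarith
          exact mul_nonneg (by linarith) (hppos j)
        have hR : (∑ m : Fin (d - 1),
              ((m.val:ℝ)+1) * p ⟨m.val + 1, by have h := m.isLt; omega⟩)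
            ≤ ∑ j : Fin d, (j.val:ℝ) * p j := by
          have hinj : ∀ m₁ ∈ (Finset.univ : Finset (Fin (d-1))), ∀ m₂ ∈ Finset.univ,
              (⟨m₁.val + 1, by have h := m₁.isLt; omega⟩ : Fin d)
                = ⟨m₂.val + 1, by have h := m₂.isLt; omega⟩ → m₁ = m₂ := by
            intro m₁ _ m₂ _ hmm
            have := congrArg Fin.val hmm
            simp only at this
            exact Fin.ext (by omega)
          rw [show (∑ m : Fin (d - 1),
                ((m.val:ℝ)+1) * p ⟨m.val + 1, by have h := m.isLt; omega⟩)
              = ∑ m : Fin (d - 1), (((m.val + 1 : ℕ)):ℝ)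
                  * p ⟨m.val + 1, by have h := m.isLt; omega⟩
            from Finset.sum_congr rfl (fun m _ => by push_cast; ring)]
          refine le_trans (le_of_eq (Finset.sum_image
              (g := fun m : Fin (d-1) =>
                (⟨m.val + 1, by have h := m.isLt; omega⟩ : Fin d))
              (f := fun j : Fin d => (j.val:ℝ) * p j) hinj).symm)
            (Finset.sum_le_sum_of_subset_of_nonneg (Finset.subset_univ _) ?_)
          intro j _ _
          exact mul_nonneg (by positivity) (hppos j)
        calc (∑ m : Fin (d - 1),
              ((d:ℝ)-1-(m.val:ℝ)) * p ⟨m.val, lt_of_lt_of_le m.isLt (Nat.sub_le d 1)⟩)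
            + (∑ m : Fin (d - 1),
              ((m.val:ℝ)+1) * p ⟨m.val + 1, by have h := m.isLt; omega⟩)
            ≤ (∑ j : Fin d, ((d:ℝ)-1-(j.val:ℝ)) * p j) + ∑ j : Fin d, (j.val:ℝ) * p j :=
              add_le_add hL hR
          _ = ∑ j : Fin d, ((d:ℝ)-1) * p j := by
              rw [← Finset.sum_add_distrib]
              exact Finset.sum_congr rfl (fun j _ => by ring)
          _ = ((d:ℝ)-1) * ∑ j : Fin d, p j := by rw [Finset.mul_sum]
          _ = (d:ℝ)-1 := by rw [hpdef]; rw [hNu]; ring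
  -- value of G at T
  have hvalT : U T nd n0 = -Complex.I := by
    rw [hUT]; exact expEntry d n0 nd hne
  have hpT : Complex.normSq (U T nd n0) = 1 := by
    rw [hvalT]; simp [Complex.normSq]
  have hTmem : T ∈ Set.Icc (0:ℝ) T := ⟨hT, le_refl T⟩
  have hsumT : (∑ j : Fin d, Complex.normSq (U T j n0)) = 1 := by
    have := hNconst T hTmem
    simpa [Nf, x1] using this
  have hothers : ∀ j : Fin d, j ≠ nd → Complex.normSq (U T j n0) = 0 := by
    have herase : (∑ j ∈ Finset.univ.erase nd, Complex.normSq (U T j n0)) = 0 := by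
      have h2 := Finset.sum_erase_add Finset.univ
        (fun j => Complex.normSq (U T j n0)) (Finset.mem_univ nd)
      rw [hpT, show (Finset.univ.sum fun j => Complex.normSq (U T j n0)) = 1
        from hsumT] at h2
      linarith
    intro j hj
    have := (Finset.sum_eq_zero_iff_of_nonneg
      (fun i _ => Complex.normSq_nonneg (U T i n0))).mp herase j
      (Finset.mem_erase.mpr ⟨hj, Finset.mem_univ j⟩)
    exact this
  have hGT : G T = xw (d - 1) := by
    show (∑ j : Fin d, xG j * Complex.normSq (U T j n0)) = xw (d-1)
    rw [Finset.sum_eq_single nd]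
    · rw [hpT]; show xw nd.val * 1 = xw (d-1); simp [nd]
    · intro j _ hj
      rw [hothers j hj]; ring
    · intro hcon; exact absurd (Finset.mem_univ nd) hcon
  have hG0 : G 0 = 0 := by
    show (∑ j : Fin d, xG j * Complex.normSq (U 0 j n0)) = 0
    rw [hN0 xG]
    show xw n0.val = 0
    simp [n0, xw]
  -- lower bound on xw (d-1)
  have hxwlow : ((d:ℝ)-1) * Real.sqrt ((d:ℝ)-1) ≤ xw (d-1) := by
    have hterm : ∀ m ∈ Finset.range (d-1), Real.sqrt ((d:ℝ)-1) ≤ δ m := by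
      intro m hm
      have hmlt : m + 1 ≤ d - 1 := Finset.mem_range.mp hm
      have hmr : (m:ℝ) + 1 ≤ (d:ℝ) - 1 := by
        have := (Nat.cast_le (α := ℝ)).mpr hmlt
        rw [Nat.cast_sub (by omega : 1 ≤ d)] at this
        push_cast at this ⊢; linarith
      refine Real.sqrt_le_sqrt ?_
      nlinarith
    calc ((d:ℝ)-1) * Real.sqrt ((d:ℝ)-1)
        = ∑ _m ∈ Finset.range (d-1), Real.sqrt ((d:ℝ)-1) := by
          rw [Finset.sum_const, Finset.card_range, nsmul_eq_mul,
            Nat.cast_sub (by omega : 1 ≤ d)]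
          push_cast; ring
      _ ≤ ∑ m ∈ Finset.range (d-1), δ m := Finset.sum_le_sum hterm
      _ = xw (d-1) := rfl
  -- mean value bound for G
  have hGbd := (convex_Icc (0:ℝ) T).norm_image_sub_le_of_norm_hasDerivWithin_le
    (f' := Dfun) (fun v hv => (hGd v hv).hasDerivWithinAt) hDbound ⟨le_refl 0, hT⟩ hTmem
  have hGbd' : G T - G 0 ≤ Jr * ((d:ℝ)-1) * T := by
    have h1 : G T - G 0 ≤ ‖G T - G 0‖ := le_abs_self _
    have h2 : ‖T - (0:ℝ)‖ = T := by rw [sub_zero, Real.norm_eq_abs, _root_.abs_of_nonneg hT]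
    rw [h2] at hGbd
    linarith
  rw [hGT, hG0, sub_zero] at hGbd'
  -- final arithmetic
  have hkey : ((d:ℝ)-1) * Real.sqrt ((d:ℝ)-1) ≤ Jr * ((d:ℝ)-1) * T :=
    le_trans hxwlow hGbd'
  have hstep : Real.sqrt ((d:ℝ)-1) * Real.sqrt (2*((d:ℝ)-1)) ≤ T := by
    rw [hJrdef] at hkey
    have h3 : Real.sqrt ((d:ℝ)-1) ≤ T / Real.sqrt (2*((d:ℝ)-1)) := by
      have := (mul_le_mul_iff_right₀ hd1).mp (by linarith [hkey] :
        ((d:ℝ)-1) * Real.sqrt ((d:ℝ)-1) ≤ ((d:ℝ)-1) * (1 / Real.sqrt (2*((d:ℝ)-1)) * T))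
      calc Real.sqrt ((d:ℝ)-1) ≤ 1 / Real.sqrt (2*((d:ℝ)-1)) * T := this
        _ = T / Real.sqrt (2*((d:ℝ)-1)) := by ring
    calc Real.sqrt ((d:ℝ)-1) * Real.sqrt (2*((d:ℝ)-1))
        ≤ (T / Real.sqrt (2*((d:ℝ)-1))) * Real.sqrt (2*((d:ℝ)-1)) :=
          mul_le_mul_of_nonneg_right h3 hsq.le
      _ = T := by field_simp
  have hfinal : Real.sqrt 2 * ((d:ℝ)-1)
      = Real.sqrt ((d:ℝ)-1) * Real.sqrt (2*((d:ℝ)-1)) := by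
    rw [← Real.sqrt_mul hd1.le, show ((d:ℝ)-1) * (2*((d:ℝ)-1)) = 2 * (((d:ℝ)-1)*((d:ℝ)-1))
        from by ring, Real.sqrt_mul (by norm_num : (0:ℝ) ≤ 2),
      Real.sqrt_mul_self hd1.le]
  rw [hfinal]
  exact hstep

end
end

section
/- For every n ∈ ℕ and every x : Fin n → ℝ, one has 1 − cos(Σ_{i} x_i) ≤ n · Σ_{i} (1 − cos x_i). Equivalently, the ratio S(x₁,…,x_n) := (1 − cos(Σ_i x_i)) / (1 − (1/n) Σ_i cos x_i) is bounded above by n² whenever its denominator is positive. -/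
open Real

lemma abs_sin_sum_le (n : ℕ) (f : Fin n → ℝ) :
    |Real.sin (∑ i, f i)| ≤ ∑ i, |Real.sin (f i)| := by
  induction n with
  | zero => simp
  | succ m ih =>
    rw [Fin.sum_univ_succ, Fin.sum_univ_succ]
    calc |Real.sin (f 0 + ∑ i : Fin m, f i.succ)|
        ≤ |Real.sin (f 0)| + |Real.sin (∑ i : Fin m, f i.succ)| := by
          rw [Real.sin_add]
          refine (abs_add_le _ _).trans (add_le_add ?_ ?_)
          · calc |Real.sin (f 0) * Real.cos (∑ i : Fin m, f i.succ)|
                = |Real.sin (f 0)| * |Real.cos (∑ i : Fin m, f i.succ)| := abs_mul _ _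
              _ ≤ |Real.sin (f 0)| * 1 := by
                  gcongr; exact Real.abs_cos_le_one _
              _ = |Real.sin (f 0)| := mul_one _
          · calc |Real.cos (f 0) * Real.sin (∑ i : Fin m, f i.succ)|
                = |Real.cos (f 0)| * |Real.sin (∑ i : Fin m, f i.succ)| := abs_mul _ _
              _ ≤ 1 * |Real.sin (∑ i : Fin m, f i.succ)| := by
                  gcongr; exact Real.abs_cos_le_one _
              _ = _ := one_mul _
      _ ≤ |Real.sin (f 0)| + ∑ i : Fin m, |Real.sin (f i.succ)| := by
          gcongr; exact ih _

lemma one_sub_cos_eq (x : ℝ) : 1 - Real.cos x = 2 * Real.sin (x / 2) ^ 2 := by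
  have h : Real.cos x = 2 * Real.cos (x / 2) ^ 2 - 1 := by
    rw [show x = 2 * (x / 2) by ring, Real.cos_two_mul]; ring_nf
  have := Real.sin_sq_add_cos_sq (x / 2)
  nlinarith

/-- The maximization bound for the ratio `S`:
`1 − cos(∑ᵢ xᵢ) ≤ n ∑ᵢ (1 − cos xᵢ)`; equivalently, whenever its denominator is positive,
`S(x₁,…,x_n) = (1 − cos(∑ᵢ xᵢ))/(1 − (1/n)∑ᵢ cos xᵢ) ≤ n²`. -/
theorem one_sub_cos_sum_le (n : ℕ) (x : Fin n → ℝ) :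
    (1 - Real.cos (∑ i, x i) ≤ (n : ℝ) * ∑ i, (1 - Real.cos (x i))) ∧
    (0 < 1 - (1 / (n : ℝ)) * ∑ i, Real.cos (x i) →
      (1 - Real.cos (∑ i, x i)) / (1 - (1 / (n : ℝ)) * ∑ i, Real.cos (x i)) ≤
        (n : ℝ) ^ 2) := by
  have key : 1 - Real.cos (∑ i, x i) ≤ (n : ℝ) * ∑ i, (1 - Real.cos (x i)) := by
    have h1 : |Real.sin ((∑ i, x i) / 2)| ≤ ∑ i, |Real.sin (x i / 2)| := by
      rw [Finset.sum_div]
      exact abs_sin_sum_le n fun i => x i / 2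
    have h2 : (∑ i, |Real.sin (x i / 2)|) ^ 2 ≤
        (n : ℝ) * ∑ i, |Real.sin (x i / 2)| ^ 2 := by
      simpa using sq_sum_le_card_mul_sum_sq (s := Finset.univ)
        (f := fun i => |Real.sin (x i / 2)|)
    have h3 : Real.sin ((∑ i, x i) / 2) ^ 2 ≤ (∑ i, |Real.sin (x i / 2)|) ^ 2 := by
      rw [← sq_abs]
      exact pow_le_pow_left₀ (abs_nonneg _) h1 2
    rw [one_sub_cos_eq]
    calc 2 * Real.sin ((∑ i, x i) / 2) ^ 2
        ≤ 2 * ((n : ℝ) * ∑ i, |Real.sin (x i / 2)| ^ 2) := by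
          gcongr; exact h3.trans h2
      _ = (n : ℝ) * ∑ i, (1 - Real.cos (x i)) := by
          rw [Finset.mul_sum, Finset.mul_sum, Finset.mul_sum]
          congr 1; ext i
          rw [one_sub_cos_eq, sq_abs]; ring
  refine ⟨key, fun hd => ?_⟩
  rcases Nat.eq_zero_or_pos n with rfl | hn
  · norm_num
  have hn' : (0:ℝ) < n := by exact_mod_cast hn
  rw [div_le_iff₀ hd]
  have : 1 - (1 / (n : ℝ)) * ∑ i, Real.cos (x i)
      = (1 / (n : ℝ)) * ∑ i, (1 - Real.cos (x i)) := by
    rw [Finset.sum_sub_distrib]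
    field_simp
    simp
  rw [this]
  calc 1 - Real.cos (∑ i, x i) ≤ (n : ℝ) * ∑ i, (1 - Real.cos (x i)) := key
    _ = (n : ℝ) ^ 2 * ((1 / (n : ℝ)) * ∑ i, (1 - Real.cos (x i))) := by
        field_simp
end
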